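/- arXiv:1309.7239 — 2 statements merged into one kernel-verified Lean document; each statement's English description precedes it below -/
import Mathlib

section
/- For any two tuples of integers a = (a_1, ..., a_n) with a_1 ≥ ... ≥ a_n and a' = (a'_1, ..., a'_n) with a'_1 ≥ ... ≥ a'_n, one has the equality of subsets of GL_n(ℚ_p): (I d_a I) · (I d_{a'} I) = I d_{a+a'} I. (This is the set-theoretic form of the Hecke-algebra relation U(a_1,...,a_n)·U(a'_1,...,a'_n) = U(a_1+a'_1,...,a_n+a'_n), which makes the Atkin–Lehner monoid 𝒰⁻ multiplicative.) -/
open Pointwise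

/-- The Iwahori subgroup of `GL_n(ℚ_p)`: matrices with entries in `ℤ_p`, determinant a
`p`-adic unit, and entries strictly below the diagonal in `pℤ_p`. -/
def Iwahori (p : ℕ) [Fact p.Prime] (n : ℕ) :
    Set (Matrix.GeneralLinearGroup (Fin n) ℚ_[p]) :=
  {g | (∀ i j : Fin n, ‖(g : Matrix (Fin n) (Fin n) ℚ_[p]) i j‖ ≤ 1) ∧
    ‖(g : Matrix (Fin n) (Fin n) ℚ_[p]).det‖ = 1 ∧
    ∀ i j : Fin n, j < i → ‖(g : Matrix (Fin n) (Fin n) ℚ_[p]) i j‖ < 1}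

/-- The diagonal matrix `diag(p^{a_1}, ..., p^{a_n})` as an element of `GL_n(ℚ_p)`. -/
noncomputable def dGL (p : ℕ) [Fact p.Prime] (n : ℕ) (a : Fin n → ℤ) :
    Matrix.GeneralLinearGroup (Fin n) ℚ_[p] :=
  Matrix.GeneralLinearGroup.mkOfDetNeZero
    (Matrix.diagonal fun i => (p : ℚ_[p]) ^ (a i))
    (by
      rw [Matrix.det_diagonal]
      exact Finset.prod_ne_zero_iff.2 fun i _ =>
        zpow_ne_zero _ (Nat.cast_ne_zero.mpr (Fact.out : p.Prime).ne_zero))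

namespace IwahoriProof

variable {p : ℕ} [Fact p.Prime] {n : ℕ}


lemma hp0 : (p : ℚ_[p]) ≠ 0 := Nat.cast_ne_zero.mpr (Fact.out : p.Prime).ne_zero

lemma norm_p_zpow_le_one {k : ℤ} (hk : 0 ≤ k) : ‖(p : ℚ_[p]) ^ k‖ ≤ 1 := by
  rw [Padic.norm_p_zpow]
  exact zpow_le_one_of_nonpos₀ (by exact_mod_cast (Fact.out : p.Prime).one_le)
    (neg_nonpos.mpr hk)



lemma norm_mul_lt_one_left {x y : ℚ_[p]} (hx : ‖x‖ < 1) (hy : ‖y‖ ≤ 1) : ‖x * y‖ < 1 := by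
  rw [norm_mul]
  calc ‖x‖ * ‖y‖ ≤ ‖x‖ * 1 := mul_le_mul_of_nonneg_left hy (norm_nonneg _)
    _ < 1 := by rwa [mul_one]

lemma norm_mul_lt_one_right {x y : ℚ_[p]} (hx : ‖x‖ ≤ 1) (hy : ‖y‖ < 1) : ‖x * y‖ < 1 := by
  rw [mul_comm]; exact norm_mul_lt_one_left hy hx

lemma norm_sum_lt_one' {ι : Type*} (s : Finset ι) (f : ι → ℚ_[p]) (h : ∀ i ∈ s, ‖f i‖ < 1) :
    ‖∑ i ∈ s, f i‖ < 1 := by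
  rcases s.eq_empty_or_nonempty with rfl | hs
  · simp
  · obtain ⟨i, hi, hle⟩ := IsUltrametricDist.exists_norm_finset_sum_le_of_nonempty hs f
    exact hle.trans_lt (h i hi)

variable (p n) in
lemma one_mem_iwahori : (1 : Matrix.GeneralLinearGroup (Fin n) ℚ_[p]) ∈ Iwahori p n := by
  refine ⟨fun i j => ?_, by simp, fun i j hij => ?_⟩
  · rw [Units.val_one, Matrix.one_apply]
    split_ifs <;> simp
  · rw [Units.val_one, Matrix.one_apply_ne (fun h => hij.ne (by rw [h])), norm_zero]
    norm_num

lemma mul_mem_iwahori {g h : Matrix.GeneralLinearGroup (Fin n) ℚ_[p]}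
    (hg : g ∈ Iwahori p n) (hh : h ∈ Iwahori p n) : g * h ∈ Iwahori p n := by
  obtain ⟨hg1, hg2, hg3⟩ := hg
  obtain ⟨hh1, hh2, hh3⟩ := hh
  refine ⟨fun i j => ?_, ?_, fun i j hij => ?_⟩
  · rw [Units.val_mul, Matrix.mul_apply]
    refine IsUltrametricDist.norm_sum_le_of_forall_le_of_nonneg zero_le_one fun k _ => ?_
    rw [norm_mul]
    exact mul_le_one₀ (hg1 _ _) (norm_nonneg _) (hh1 _ _)
  · rw [Units.val_mul, Matrix.det_mul, norm_mul, hg2, hh2, one_mul]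
  · rw [Units.val_mul, Matrix.mul_apply]
    refine norm_sum_lt_one' _ _ fun k _ => ?_
    rcases le_or_gt k j with hk | hk
    · exact norm_mul_lt_one_left (hg3 _ _ (hk.trans_lt hij)) (hh1 _ _)
    · exact norm_mul_lt_one_right (hg1 _ _) (hh3 _ _ hk)

variable (p n) in
lemma iwahori_mul_self : Iwahori p n * Iwahori p n = Iwahori p n := by
  apply Set.Subset.antisymm
  · rintro x ⟨g, hg, h, hh, rfl⟩
    exact mul_mem_iwahori hg hh
  · intro g hg
    exact ⟨g, hg, 1, one_mem_iwahori p n, mul_one g⟩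

lemma dGL_coe (a : Fin n → ℤ) :
    ((dGL p n a : Matrix.GeneralLinearGroup (Fin n) ℚ_[p]) : Matrix (Fin n) (Fin n) ℚ_[p])
      = Matrix.diagonal fun i => (p : ℚ_[p]) ^ (a i) := rfl

lemma dGL_mul (a b : Fin n → ℤ) : dGL p n a * dGL p n b = dGL p n (a + b) := by
  apply Units.ext
  rw [Units.val_mul, dGL_coe, dGL_coe, dGL_coe, Matrix.diagonal_mul_diagonal]
  have h : (fun i => (p:ℚ_[p]) ^ a i * (p:ℚ_[p]) ^ b i) = fun i => (p:ℚ_[p]) ^ ((a+b) i) := by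
    funext i; rw [Pi.add_apply, zpow_add₀ hp0]
  rw [h]

lemma dGL_zero : dGL p n 0 = 1 := by
  apply Units.ext
  rw [dGL_coe, Units.val_one]
  simp

lemma dGL_inv (a : Fin n → ℤ) : (dGL p n a)⁻¹ = dGL p n (-a) := by
  rw [inv_eq_iff_mul_eq_one, dGL_mul, add_neg_cancel, dGL_zero]

lemma conj_diag_mem (b c : Fin n → ℤ) (hbc : ∀ i, b i + c i = 0)
    (B : Matrix.GeneralLinearGroup (Fin n) ℚ_[p])
    (hB1 : ∀ i j, ‖(B : Matrix (Fin n) (Fin n) ℚ_[p]) i j‖ ≤ 1)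
    (hBd : ‖(B : Matrix (Fin n) (Fin n) ℚ_[p]).det‖ = 1)
    (hB2 : ∀ i j : Fin n, j < i → ‖(B : Matrix (Fin n) (Fin n) ℚ_[p]) i j‖ < 1)
    (hpos : ∀ i j, (B : Matrix (Fin n) (Fin n) ℚ_[p]) i j ≠ 0 → 0 ≤ b i + c j) :
    dGL p n b * B * dGL p n c ∈ Iwahori p n := by
  have hent : ∀ i j, ((dGL p n b * B * dGL p n c :
        Matrix.GeneralLinearGroup (Fin n) ℚ_[p]) : Matrix (Fin n) (Fin n) ℚ_[p]) i j
      = (p : ℚ_[p]) ^ (b i + c j) * (B : Matrix (Fin n) (Fin n) ℚ_[p]) i j := by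
    intro i j
    rw [Units.val_mul, Units.val_mul, dGL_coe, dGL_coe, Matrix.mul_diagonal,
      Matrix.diagonal_mul, zpow_add₀ hp0]
    ring
  have hnorm : ∀ i j, ‖((dGL p n b * B * dGL p n c :
        Matrix.GeneralLinearGroup (Fin n) ℚ_[p]) : Matrix (Fin n) (Fin n) ℚ_[p]) i j‖
      ≤ ‖(B : Matrix (Fin n) (Fin n) ℚ_[p]) i j‖ := by
    intro i j
    rw [hent]
    by_cases hx : (B : Matrix (Fin n) (Fin n) ℚ_[p]) i j = 0
    · rw [hx, mul_zero]
    · rw [norm_mul]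
      calc ‖(p:ℚ_[p]) ^ (b i + c j)‖ * ‖(B : Matrix (Fin n) (Fin n) ℚ_[p]) i j‖
          ≤ 1 * ‖(B : Matrix (Fin n) (Fin n) ℚ_[p]) i j‖ :=
            mul_le_mul_of_nonneg_right (norm_p_zpow_le_one (hpos i j hx)) (norm_nonneg _)
        _ = _ := one_mul _
  refine ⟨fun i j => (hnorm i j).trans (hB1 i j), ?_, fun i j hij => (hnorm i j).trans_lt (hB2 i j hij)⟩
  have h5 : ((dGL p n b : Matrix.GeneralLinearGroup (Fin n) ℚ_[p]) :
        Matrix (Fin n) (Fin n) ℚ_[p]).det *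
      ((dGL p n c : Matrix.GeneralLinearGroup (Fin n) ℚ_[p]) :
        Matrix (Fin n) (Fin n) ℚ_[p]).det = 1 := by
    rw [dGL_coe, dGL_coe, Matrix.det_diagonal, Matrix.det_diagonal, ← Finset.prod_mul_distrib]
    exact Finset.prod_eq_one fun i _ => by rw [← zpow_add₀ hp0, hbc i, zpow_zero]
  rw [Units.val_mul, Units.val_mul, Matrix.det_mul, Matrix.det_mul, mul_right_comm, h5,
    one_mul, hBd]



lemma norm_sum_lt_one {ι : Type*} (s : Finset ι) (f : ι → ℚ_[p]) (h : ∀ i ∈ s, ‖f i‖ < 1) :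
    ‖∑ i ∈ s, f i‖ < 1 := by
  rcases s.eq_empty_or_nonempty with rfl | hs
  · simp
  · obtain ⟨i, hi, hle⟩ := IsUltrametricDist.exists_norm_finset_sum_le_of_nonempty hs f
    exact hle.trans_lt (h i hi)

lemma norm_sub_le_max (x y : ℚ_[p]) : ‖x - y‖ ≤ max ‖x‖ ‖y‖ := by
  rw [sub_eq_add_neg]
  exact (IsUltrametricDist.norm_add_le_max _ _).trans (by rw [norm_neg])

lemma norm_sub_eq_left {x y : ℚ_[p]} (h : ‖y‖ < ‖x‖) : ‖x - y‖ = ‖x‖ := by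
  rw [sub_eq_add_neg,
    IsUltrametricDist.norm_add_eq_max_of_norm_ne_norm (by rw [norm_neg]; exact h.ne'),
    norm_neg, max_eq_left h.le]

/-- Extend an `n × n` matrix by a new last row and column. -/
def ext1 (B : Matrix (Fin n) (Fin n) ℚ_[p]) (c r : Fin n → ℚ_[p]) (d : ℚ_[p]) :
    Matrix (Fin (n+1)) (Fin (n+1)) ℚ_[p] :=
  Matrix.of fun i j =>
    Fin.lastCases (Fin.lastCases d r j) (fun i' => Fin.lastCases (c i') (fun j' => B i' j') j) i

@[simp] lemma ext1_cc (B : Matrix (Fin n) (Fin n) ℚ_[p]) (c r : Fin n → ℚ_[p]) (d : ℚ_[p])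
    (i j : Fin n) : ext1 B c r d i.castSucc j.castSucc = B i j := by
  simp [ext1]

@[simp] lemma ext1_cl (B : Matrix (Fin n) (Fin n) ℚ_[p]) (c r : Fin n → ℚ_[p]) (d : ℚ_[p])
    (i : Fin n) : ext1 B c r d i.castSucc (Fin.last n) = c i := by
  simp [ext1]

@[simp] lemma ext1_lc (B : Matrix (Fin n) (Fin n) ℚ_[p]) (c r : Fin n → ℚ_[p]) (d : ℚ_[p])
    (j : Fin n) : ext1 B c r d (Fin.last n) j.castSucc = r j := by
  simp [ext1]

@[simp] lemma ext1_ll (B : Matrix (Fin n) (Fin n) ℚ_[p]) (c r : Fin n → ℚ_[p]) (d : ℚ_[p]) :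
    ext1 B c r d (Fin.last n) (Fin.last n) = d := by
  simp [ext1]

lemma factor : ∀ (n : ℕ) (M : Matrix (Fin n) (Fin n) ℚ_[p]),
    (∀ i j, ‖M i j‖ ≤ 1) → (∀ i j, j < i → ‖M i j‖ < 1) → (∀ i, ‖M i i‖ = 1) →
    ∃ B U : Matrix (Fin n) (Fin n) ℚ_[p], M = B * U ∧
      (∀ i j, j < i → B i j = 0) ∧ (∀ i j, ‖B i j‖ ≤ 1) ∧ (∀ i, ‖B i i‖ = 1) ∧
      (∀ i j, i < j → U i j = 0) ∧ (∀ i j, ‖U i j‖ ≤ 1) ∧ (∀ i, U i i = 1) ∧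
      (∀ i j, j < i → ‖U i j‖ < 1) := by
  intro n
  induction n with
  | zero =>
    intro M _ _ _
    exact ⟨1, 1, by ext i j; exact i.elim0, fun i => i.elim0, fun i => i.elim0,
      fun i => i.elim0, fun i => i.elim0, fun i => i.elim0, fun i => i.elim0, fun i => i.elim0⟩
  | succ n ih =>
    intro M h1 h2 h3
    set d := M (Fin.last n) (Fin.last n) with hd_def
    have hd : ‖d‖ = 1 := h3 _
    have hd0 : d ≠ 0 := by intro h; rw [h, norm_zero] at hd; norm_num at hd
    set c : Fin n → ℚ_[p] := fun i => M i.castSucc (Fin.last n) with hc_def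
    set r : Fin n → ℚ_[p] := fun j => M (Fin.last n) j.castSucc with hr_def
    have hr : ∀ j, ‖r j‖ < 1 := fun j => h2 _ _ (Fin.castSucc_lt_last j)
    have hc : ∀ i, ‖c i‖ ≤ 1 := fun i => h1 _ _
    have hcr : ∀ i j, ‖c i * r j / d‖ < 1 := by
      intro i j
      rw [norm_div, hd, div_one, norm_mul]
      calc ‖c i‖ * ‖r j‖ ≤ 1 * ‖r j‖ :=
            mul_le_mul_of_nonneg_right (hc i) (norm_nonneg _)
        _ < 1 := by rw [one_mul]; exact hr j
    set A : Matrix (Fin n) (Fin n) ℚ_[p] :=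
      Matrix.of (fun i j => M i.castSucc j.castSucc - c i * r j / d) with hA_def
    have hA_apply : ∀ i j, A i j = M i.castSucc j.castSucc - c i * r j / d := fun i j => rfl
    have hA1 : ∀ i j, ‖A i j‖ ≤ 1 := by
      intro i j
      rw [hA_apply]
      exact (norm_sub_le_max _ _).trans
        (max_le (h1 _ _) (hcr i j).le)
    have hA2 : ∀ i j : Fin n, j < i → ‖A i j‖ < 1 := by
      intro i j hij
      rw [hA_apply]
      exact (norm_sub_le_max _ _).trans_lt
        (max_lt (h2 _ _ (Fin.castSucc_lt_castSucc_iff.mpr hij)) (hcr i j))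
    have hA3 : ∀ i, ‖A i i‖ = 1 := by
      intro i
      rw [hA_apply, norm_sub_eq_left (by rw [h3]; exact hcr i i), h3]
    obtain ⟨B', U', hBU', hBt, hB1, hB3, hUt, hU1, hUd, hU2⟩ := ih A hA1 hA2 hA3
    refine ⟨ext1 B' c 0 d, ext1 U' 0 (fun j => r j / d) 1, ?_, ?_, ?_, ?_, ?_, ?_, ?_, ?_⟩
    · ext i j
      rw [Matrix.mul_apply, Fin.sum_univ_castSucc]
      induction i using Fin.lastCases with
      | last =>
        induction j using Fin.lastCases with
        | last => simp [hd_def]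
        | cast j' =>
          rw [Finset.sum_eq_zero (fun k _ => by simp), zero_add, ext1_ll, ext1_lc,
            mul_comm, div_mul_cancel₀ _ hd0]
      | cast i' =>
        induction j using Fin.lastCases with
        | last =>
          rw [Finset.sum_eq_zero (fun k _ => by simp), zero_add, ext1_cl, ext1_ll, mul_one]
        | cast j' =>
          simp only [ext1_cc, ext1_cl, ext1_lc]
          have : ∑ k : Fin n, B' i' k * U' k j' = A i' j' := by
            rw [hBU']; rfl
          rw [this, hA_apply]
          field_simp
          ring
    · intro i j hij
      induction i using Fin.lastCases with
      | last =>
        induction j using Fin.lastCases with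
        | last => exact absurd hij (lt_irrefl _)
        | cast j' => simp
      | cast i' =>
        induction j using Fin.lastCases with
        | last => exact absurd hij (not_lt.mpr (Fin.castSucc_lt_last i').le)
        | cast j' => rw [ext1_cc]; exact hBt _ _ (Fin.castSucc_lt_castSucc_iff.mp hij)
    · intro i j
      induction i using Fin.lastCases with
      | last =>
        induction j using Fin.lastCases with
        | last => rw [ext1_ll]; exact hd.le
        | cast j' => simp
      | cast i' =>
        induction j using Fin.lastCases with
        | last => rw [ext1_cl]; exact hc i'
        | cast j' => rw [ext1_cc]; exact hB1 _ _
    · intro i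
      induction i using Fin.lastCases with
      | last => rw [ext1_ll]; exact hd
      | cast i' => rw [ext1_cc]; exact hB3 _
    · intro i j hij
      induction i using Fin.lastCases with
      | last =>
        induction j using Fin.lastCases with
        | last => exact absurd hij (lt_irrefl _)
        | cast j' => exact absurd hij (not_lt.mpr (Fin.castSucc_lt_last j').le)
      | cast i' =>
        induction j using Fin.lastCases with
        | last => simp
        | cast j' => rw [ext1_cc]; exact hUt _ _ (Fin.castSucc_lt_castSucc_iff.mp hij)
    · intro i j
      induction i using Fin.lastCases with
      | last =>
        induction j using Fin.lastCases with
        | last => rw [ext1_ll]; norm_num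
        | cast j' =>
          rw [ext1_lc, norm_div, hd, div_one]
          exact (hr j').le
      | cast i' =>
        induction j using Fin.lastCases with
        | last => simp
        | cast j' => rw [ext1_cc]; exact hU1 _ _
    · intro i
      induction i using Fin.lastCases with
      | last => rw [ext1_ll]
      | cast i' => rw [ext1_cc]; exact hUd _
    · intro i j hij
      induction i using Fin.lastCases with
      | last =>
        induction j using Fin.lastCases with
        | last => exact absurd hij (lt_irrefl _)
        | cast j' =>
          rw [ext1_lc, norm_div, hd, div_one]
          exact hr j'
      | cast i' =>
        induction j using Fin.lastCases with
        | last => exact absurd hij (not_lt.mpr (Fin.castSucc_lt_last i').le)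
        | cast j' => rw [ext1_cc]; exact hU2 _ _ (Fin.castSucc_lt_castSucc_iff.mp hij)


lemma perm_exists_lt {σ : Equiv.Perm (Fin n)} (hσ : σ ≠ 1) : ∃ i, i < σ i := by
  by_contra h
  push_neg at h
  apply hσ
  have key : ∀ m : ℕ, ∀ i : Fin n, (i : ℕ) ≤ m → σ i = i := by
    intro m
    induction m with
    | zero =>
      intro i hi
      have h1 : ((σ i : Fin n) : ℕ) ≤ (i : ℕ) := h i
      exact Fin.ext (by omega)
    | succ m ih =>
      intro i hi
      rcases (h i).lt_or_eq with hlt | heq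
      · have h2 : ((σ i : Fin n) : ℕ) < (i : ℕ) := hlt
        have h3 : σ (σ i) = σ i := ih (σ i) (by omega)
        exact absurd (σ.injective h3) hlt.ne
      · exact heq
  exact Equiv.ext fun i => key i i le_rfl

lemma norm_diag_eq_one (M : Matrix (Fin n) (Fin n) ℚ_[p])
    (h1 : ∀ i j, ‖M i j‖ ≤ 1) (h2 : ∀ i j, j < i → ‖M i j‖ < 1)
    (hdet : ‖M.det‖ = 1) : ∀ i, ‖M i i‖ = 1 := by
  have hterm : ∀ σ : Equiv.Perm (Fin n), σ ≠ 1 →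
      ‖Equiv.Perm.sign σ • ∏ i, M (σ i) i‖ < 1 := by
    intro σ hσ
    obtain ⟨i0, hi0⟩ := perm_exists_lt hσ
    have hn : ‖∏ i, M (σ i) i‖ < 1 := by
      rw [norm_prod]
      calc ∏ i, ‖M (σ i) i‖
          = ‖M (σ i0) i0‖ * ∏ i ∈ Finset.univ.erase i0, ‖M (σ i) i‖ :=
            (Finset.mul_prod_erase Finset.univ _ (Finset.mem_univ i0)).symm
        _ ≤ ‖M (σ i0) i0‖ * 1 := by
            refine mul_le_mul_of_nonneg_left ?_ (norm_nonneg _)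
            exact Finset.prod_le_one (fun i _ => norm_nonneg _) (fun i _ => h1 _ _)
        _ < 1 := by rw [mul_one]; exact h2 _ _ hi0
    rcases Int.units_eq_one_or (Equiv.Perm.sign σ) with hs | hs
    · rwa [hs, one_smul]
    · rw [hs, Units.neg_smul, one_smul, norm_neg]; exact hn
  have hP : ‖∏ i, M i i‖ = 1 := by
    have hdiff : ‖M.det - ∏ i, M i i‖ < 1 := by
      have : M.det = (Equiv.Perm.sign (1 : Equiv.Perm (Fin n)) • ∏ i, M ((1 : Equiv.Perm (Fin n)) i) i)
          + ∑ σ ∈ Finset.univ.erase (1 : Equiv.Perm (Fin n)),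
            Equiv.Perm.sign σ • ∏ i, M (σ i) i := by
        rw [Matrix.det_apply]
        exact (Finset.add_sum_erase _ (fun σ => Equiv.Perm.sign σ • ∏ i, M (σ i) i)
          (Finset.mem_univ 1)).symm
      rw [this]
      simp only [Equiv.Perm.sign_one, Equiv.Perm.one_apply, one_smul, add_sub_cancel_left]
      exact norm_sum_lt_one _ _ (fun σ hσ => hterm σ (Finset.ne_of_mem_erase hσ))
    have : (∏ i, M i i) = M.det - (M.det - ∏ i, M i i) := by ring
    rw [this, norm_sub_eq_left (by rw [hdet]; exact hdiff), hdet]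
  intro i
  refine le_antisymm (h1 i i) ?_
  have h0 : (1:ℝ) = ∏ j, ‖M j j‖ := by rw [← norm_prod, hP]
  have e := Finset.mul_prod_erase Finset.univ (fun j => ‖M j j‖) (Finset.mem_univ i)
  calc (1:ℝ) = ∏ j, ‖M j j‖ := h0
    _ = ‖M i i‖ * ∏ j ∈ Finset.univ.erase i, ‖M j j‖ := e.symm
    _ ≤ ‖M i i‖ * 1 := mul_le_mul_of_nonneg_left
        (Finset.prod_le_one (fun j _ => norm_nonneg _) (fun j _ => h1 _ _)) (norm_nonneg _)
    _ = ‖M i i‖ := mul_one _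



set_option maxHeartbeats 1000000 in
lemma factor_GL (g : Matrix.GeneralLinearGroup (Fin n) ℚ_[p]) (hg : g ∈ Iwahori p n) :
    ∃ B U : Matrix.GeneralLinearGroup (Fin n) ℚ_[p], g = B * U ∧
      (∀ i j : Fin n, j < i → (B : Matrix (Fin n) (Fin n) ℚ_[p]) i j = 0) ∧
      (∀ i j, ‖(B : Matrix (Fin n) (Fin n) ℚ_[p]) i j‖ ≤ 1) ∧
      ‖(B : Matrix (Fin n) (Fin n) ℚ_[p]).det‖ = 1 ∧
      (∀ i j : Fin n, i < j → (U : Matrix (Fin n) (Fin n) ℚ_[p]) i j = 0) ∧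
      (∀ i j, ‖(U : Matrix (Fin n) (Fin n) ℚ_[p]) i j‖ ≤ 1) ∧
      ‖(U : Matrix (Fin n) (Fin n) ℚ_[p]).det‖ = 1 ∧
      (∀ i j : Fin n, j < i → ‖(U : Matrix (Fin n) (Fin n) ℚ_[p]) i j‖ < 1) := by
  obtain ⟨hg1, hg2, hg3⟩ := hg
  obtain ⟨B, U, hBU, hBt, hB1, hB3, hUt, hU1, hUd, hU2⟩ :=
    factor n ((g : Matrix.GeneralLinearGroup (Fin n) ℚ_[p]) : Matrix (Fin n) (Fin n) ℚ_[p])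
      hg1 hg3 (norm_diag_eq_one _ hg1 hg3 hg2)
  have hBdet : ‖B.det‖ = 1 := by
    rw [Matrix.det_of_upperTriangular (fun i j hij => hBt i j hij), norm_prod]
    exact Finset.prod_eq_one fun i _ => hB3 i
  have hUdet : ‖U.det‖ = 1 := by
    rw [Matrix.det_of_lowerTriangular U (fun i j hij => hUt i j hij),
      Finset.prod_congr rfl (fun i _ => hUd i), Finset.prod_const_one, norm_one]
  refine ⟨Matrix.GeneralLinearGroup.mkOfDetNeZero B
      (fun h => by rw [h, norm_zero] at hBdet; norm_num at hBdet),
    Matrix.GeneralLinearGroup.mkOfDetNeZero U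
      (fun h => by rw [h, norm_zero] at hUdet; norm_num at hUdet),
    Units.ext (by rw [Units.val_mul]; exact hBU), hBt, hB1, hBdet, hUt, hU1, hUdet, hU2⟩

end IwahoriProof

open IwahoriProof

/-- For decreasing tuples of integers `a` and `a'`, the product of the
Iwahori double cosets `I d_a I` and `I d_{a'} I` is the double coset `I d_{a+a'} I`,
as subsets of `GL_n(ℚ_p)`. -/
theorem doubleCoset_mul (p : ℕ) [Fact p.Prime] (n : ℕ) (hn : 1 ≤ n)
    (a a' : Fin n → ℤ) (ha : Antitone a) (ha' : Antitone a') :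
    (Iwahori p n * {dGL p n a} * Iwahori p n) *
        (Iwahori p n * {dGL p n a'} * Iwahori p n)
      = Iwahori p n * {dGL p n (a + a')} * Iwahori p n := by
  apply Set.Subset.antisymm
  · rintro x ⟨u, ⟨w, ⟨g1, hg1, d1, rfl, rfl⟩, g2, hg2, rfl⟩, v,
      ⟨w', ⟨g3, hg3, d2, rfl, rfl⟩, g4, hg4, rfl⟩, rfl⟩
    obtain ⟨B, U, hBU, hBt, hB1, hBdet, hUt, hU1, hUdet, hU2⟩ :=
      factor_GL (g2 * g3) (mul_mem_iwahori hg2 hg3)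
    have hBlow : ∀ i j : Fin n, j < i → ‖(B : Matrix (Fin n) (Fin n) ℚ_[p]) i j‖ < 1 := by
      intro i j hij
      rw [hBt i j hij, norm_zero]
      norm_num
    have hmem1 : dGL p n a * B * dGL p n (-a) ∈ Iwahori p n := by
      refine conj_diag_mem a (-a) (fun i => by simp) B hB1 hBdet hBlow fun i j hne => ?_
      rcases le_or_gt i j with h | h
      · have h' := ha h
        simp only [Pi.neg_apply]
        omega
      · exact absurd (hBt i j h) hne
    have hmem2 : dGL p n (-a') * U * dGL p n a' ∈ Iwahori p n := by
      refine conj_diag_mem (-a') a' (fun i => by simp) U hU1 hUdet hU2 fun i j hne => ?_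
      rcases le_or_gt j i with h | h
      · have h' := ha' h
        simp only [Pi.neg_apply]
        omega
      · exact absurd (hUt i j h) hne
    refine ⟨g1 * (dGL p n a * B * dGL p n (-a)) * dGL p n (a + a'),
      ⟨g1 * (dGL p n a * B * dGL p n (-a)), mul_mem_iwahori hg1 hmem1,
        dGL p n (a + a'), rfl, rfl⟩,
      (dGL p n (-a') * U * dGL p n a') * g4, mul_mem_iwahori hmem2 hg4, ?_⟩
    have e1 : dGL p n (-a) = (dGL p n a)⁻¹ := (dGL_inv a).symm
    have e2 : dGL p n (-a') = (dGL p n a')⁻¹ := (dGL_inv a').symm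
    have e3 : dGL p n (a + a') = dGL p n a * dGL p n a' := (dGL_mul a a').symm
    have key : g1 * (dGL p n a * B * (dGL p n a)⁻¹) * (dGL p n a * dGL p n a') *
        ((dGL p n a')⁻¹ * U * dGL p n a' * g4)
        = g1 * dGL p n a * (B * U) * (dGL p n a' * g4) := by
      group
    have final : g1 * (dGL p n a * B * dGL p n (-a)) * dGL p n (a + a') *
        ((dGL p n (-a') * U * dGL p n a') * g4)
        = g1 * dGL p n a * g2 * (g3 * dGL p n a' * g4) := by
      rw [e1, e2, e3, key, ← hBU]
      group
    exact final
  · rintro x ⟨w, ⟨g1, hg1, d1, rfl, rfl⟩, g2, hg2, rfl⟩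
    refine ⟨(g1 * dGL p n a) * 1,
      ⟨g1 * dGL p n a, ⟨g1, hg1, dGL p n a, rfl, rfl⟩, 1, one_mem_iwahori p n, rfl⟩,
      (1 * dGL p n a') * g2,
      ⟨1 * dGL p n a', ⟨1, one_mem_iwahori p n, dGL p n a', rfl, rfl⟩, g2, hg2, rfl⟩, ?_⟩
    have final : (g1 * dGL p n a) * 1 * ((1 * dGL p n a') * g2)
        = g1 * dGL p n (a + a') * g2 := by
      rw [← dGL_mul]
      group
    exact final
end

section
/- For any two tuples of integers a = (a_1, ..., a_n) with a_1 ≥ ... ≥ a_n and a' = (a'_1, ..., a'_n) with a'_1 ≥ ... ≥ a'_n, the double cosets commute as subsets of GL_n(ℚ_p): (I d_a I) · (I d_{a'} I) = (I d_{a'} I) · (I d_a I). (This expresses the commutativity of the Atkin–Lehner subalgebra ℋ_p of the Iwahori–Hecke algebra.) -/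
open Pointwise

open Finset Matrix

variable {p : ℕ} [Fact p.Prime] {n : ℕ}


lemma pad_sum_le {ι : Type*} (s : Finset ι) (f : ι → ℚ_[p]) {C : ℝ} (h0 : 0 ≤ C)
    (h : ∀ i ∈ s, ‖f i‖ ≤ C) : ‖∑ i ∈ s, f i‖ ≤ C :=
  IsUltrametricDist.norm_sum_le_of_forall_le_of_nonneg h0 h

lemma pad_sum_lt {ι : Type*} (s : Finset ι) (f : ι → ℚ_[p]) {C : ℝ} (h0 : 0 < C)
    (h : ∀ i ∈ s, ‖f i‖ < C) : ‖∑ i ∈ s, f i‖ < C := by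
  rcases s.eq_empty_or_nonempty with rfl | hs
  · simpa using h0
  · exact lt_of_le_of_lt (hs.norm_sum_le_sup'_norm f) (Finset.sup'_lt_iff hs |>.2 h)

lemma pad_add_eq_left {x y : ℚ_[p]} (h : ‖y‖ < ‖x‖) : ‖x + y‖ = ‖x‖ := by
  rw [Padic.add_eq_max_of_ne (ne_of_gt h)]; exact max_eq_left h.le

lemma perm_exists_lt {σ : Equiv.Perm (Fin n)} (hσ : σ ≠ 1) : ∃ i, i < σ i := by
  by_contra hc
  push_neg at hc
  apply hσ
  have hsum : ∑ i : Fin n, ((i : ℤ) - (σ i : ℤ)) = 0 := by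
    rw [Finset.sum_sub_distrib, Equiv.sum_comp σ (fun i : Fin n => (i : ℤ))]
    ring
  have hnn : ∀ i ∈ Finset.univ, (0:ℤ) ≤ ((i : Fin n) : ℤ) - ((σ i : Fin n) : ℤ) := by
    intro i _
    have h := hc i
    have : ((σ i : Fin n) : ℕ) ≤ (i : ℕ) := h
    omega
  have := (Finset.sum_eq_zero_iff_of_nonneg hnn).1 hsum
  ext i
  have h2 := this i (Finset.mem_univ i)
  have : ((σ i : Fin n) : ℕ) = (i : ℕ) := by omega
  simpa [Fin.ext_iff] using this

lemma det_sub_diag_lt {M : Matrix (Fin n) (Fin n) ℚ_[p]}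
    (h1 : ∀ i j, ‖M i j‖ ≤ 1) (h2 : ∀ i j : Fin n, j < i → ‖M i j‖ < 1) :
    ‖M.det - ∏ i, M i i‖ < 1 := by
  have hdet := Matrix.det_apply' M
  have hsplit : M.det - ∏ i, M i i
      = ∑ σ ∈ Finset.univ.erase (1 : Equiv.Perm (Fin n)),
          ((Equiv.Perm.sign σ : ℤ) : ℚ_[p]) * ∏ i, M (σ i) i := by
    rw [hdet, ← Finset.add_sum_erase _ _ (Finset.mem_univ (1 : Equiv.Perm (Fin n)))]
    simp
  rw [hsplit]
  refine pad_sum_lt _ _ one_pos ?_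
  intro σ hσ
  have hσ1 : σ ≠ 1 := (Finset.mem_erase.1 hσ).1
  obtain ⟨i₀, hi₀⟩ := perm_exists_lt hσ1
  have hsign : ‖((Equiv.Perm.sign σ : ℤ) : ℚ_[p])‖ = 1 := by
    rcases Int.units_eq_one_or (Equiv.Perm.sign σ) with h | h <;> simp [h]
  rw [norm_mul, hsign, one_mul, norm_prod]
  calc ∏ i, ‖M (σ i) i‖ = ‖M (σ i₀) i₀‖ * ∏ i ∈ Finset.univ.erase i₀, ‖M (σ i) i‖ :=
        (Finset.mul_prod_erase Finset.univ (fun i => ‖M (σ i) i‖) (Finset.mem_univ i₀)).symm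
    _ ≤ ‖M (σ i₀) i₀‖ * 1 := by
        refine mul_le_mul_of_nonneg_left ?_ (norm_nonneg _)
        exact Finset.prod_le_one (fun _ _ => norm_nonneg _) (fun i _ => h1 _ _)
    _ < 1 := by rw [mul_one]; exact h2 _ _ hi₀

lemma diag_norm_one {M : Matrix (Fin n) (Fin n) ℚ_[p]}
    (h1 : ∀ i j, ‖M i j‖ ≤ 1) (h2 : ∀ i j : Fin n, j < i → ‖M i j‖ < 1)
    (h3 : ‖M.det‖ = 1) : ∀ i, ‖M i i‖ = 1 := by
  have hprod : ‖∏ i, M i i‖ = 1 := by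
    have : ∏ i, M i i = M.det + (∏ i, M i i - M.det) := by ring
    rw [this, pad_add_eq_left]
    · exact h3
    · rw [h3, ← norm_neg]; simpa using det_sub_diag_lt h1 h2
  intro i
  refine le_antisymm (h1 i i) ?_
  rw [norm_prod] at hprod
  calc (1:ℝ) = ‖M i i‖ * ∏ j ∈ Finset.univ.erase i, ‖M j j‖ := by
        rw [Finset.mul_prod_erase Finset.univ (fun j => ‖M j j‖) (Finset.mem_univ i), hprod]
    _ ≤ ‖M i i‖ * 1 := mul_le_mul_of_nonneg_left
        (Finset.prod_le_one (fun _ _ => norm_nonneg _) (fun j _ => h1 j j)) (norm_nonneg _)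
    _ = ‖M i i‖ := mul_one _

lemma det_norm_one_of_diag {M : Matrix (Fin n) (Fin n) ℚ_[p]}
    (h1 : ∀ i j, ‖M i j‖ ≤ 1) (h2 : ∀ i j : Fin n, j < i → ‖M i j‖ < 1)
    (hd : ∀ i, ‖M i i‖ = 1) : ‖M.det‖ = 1 := by
  have : M.det = (∏ i, M i i) + (M.det - ∏ i, M i i) := by ring
  rw [this, pad_add_eq_left]
  · rw [norm_prod]; exact Finset.prod_eq_one (fun i _ => hd i)
  · rw [norm_prod, Finset.prod_eq_one (fun i _ => hd i)]
    exact det_sub_diag_lt h1 h2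

lemma det_norm_le_one {M : Matrix (Fin n) (Fin n) ℚ_[p]}
    (h1 : ∀ i j, ‖M i j‖ ≤ 1) : ‖M.det‖ ≤ 1 := by
  rw [Matrix.det_apply']
  refine pad_sum_le _ _ zero_le_one ?_
  intro σ _
  have hsign : ‖((Equiv.Perm.sign σ : ℤ) : ℚ_[p])‖ = 1 := by
    rcases Int.units_eq_one_or (Equiv.Perm.sign σ) with h | h <;> simp [h]
  rw [norm_mul, hsign, one_mul, norm_prod]
  exact Finset.prod_le_one (fun _ _ => norm_nonneg _) (fun i _ => h1 _ _)

lemma adjugate_norm_le {M : Matrix (Fin n) (Fin n) ℚ_[p]}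
    (h1 : ∀ i j, ‖M i j‖ ≤ 1) (i j : Fin n) : ‖M.adjugate i j‖ ≤ 1 := by
  rw [Matrix.adjugate_apply]
  refine det_norm_le_one ?_
  intro k l
  rw [Matrix.updateRow_apply]
  split_ifs with h
  · simp only [Pi.single_apply]; split_ifs <;> simp
  · exact h1 k l

lemma inv_norm_le {M : Matrix (Fin n) (Fin n) ℚ_[p]}
    (h1 : ∀ i j, ‖M i j‖ ≤ 1) (h3 : ‖M.det‖ = 1) (i j : Fin n) : ‖M⁻¹ i j‖ ≤ 1 := by
  have hdet : M.det ≠ 0 := by intro h; rw [h] at h3; simp at h3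
  rw [Matrix.inv_def, Ring.inverse_eq_inv']
  have : (M.det⁻¹ • M.adjugate) i j = M.det⁻¹ * M.adjugate i j := rfl
  rw [this, norm_mul, norm_inv, h3, inv_one, one_mul]
  exact adjugate_norm_le h1 i j

theorem iwahori_factor : ∀ (n : ℕ) (u : Matrix (Fin n) (Fin n) ℚ_[p]),
    (∀ i j, ‖u i j‖ ≤ 1) → (∀ i j : Fin n, j < i → ‖u i j‖ < 1) → (∀ i, ‖u i i‖ = 1) →
    ∃ b v : Matrix (Fin n) (Fin n) ℚ_[p],
      (∀ i j, ‖b i j‖ ≤ 1) ∧ (∀ i j : Fin n, j < i → b i j = 0) ∧ (∀ i, ‖b i i‖ = 1) ∧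
      (∀ i j, ‖v i j‖ ≤ 1) ∧ (∀ i j : Fin n, i < j → v i j = 0) ∧ (∀ i, v i i = 1) ∧
      (∀ i j : Fin n, j < i → ‖v i j‖ < 1) ∧ u = b * v := by
  intro n
  induction n with
  | zero =>
      intro u _ _ _
      refine ⟨1, 1, ?_, ?_, ?_, ?_, ?_, ?_, ?_, ?_⟩ <;>
        first
          | (intro i; exact i.elim0)
          | (intro i j; exact i.elim0)
          | (ext i j; exact i.elim0)
  | succ n IH =>
      intro u h1 h2 hd
      set D : Matrix (Fin n) (Fin n) ℚ_[p] := u.submatrix Fin.succ Fin.succ with hD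
      obtain ⟨B, V, hB1, hB0, hBd, hV1, hV0, hVd, hVlt, hBV⟩ :=
        IH D (fun i j => h1 _ _) (fun i j h => h2 _ _ (Fin.succ_lt_succ_iff.2 h))
          (fun i => hd i.succ)
      have hBzlt : ∀ i j : Fin n, j < i → ‖B i j‖ < 1 := by
        intro i j h; rw [hB0 i j h]; simp
      have hVzlt : ∀ i j : Fin n, i < j → ‖V i j‖ < 1 := by
        intro i j h; rw [hV0 i j h]; simp
      have hBdet : ‖B.det‖ = 1 := det_norm_one_of_diag hB1 hBzlt hBd
      have hVdet : V.det = 1 := by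
        have ht : V.BlockTriangular OrderDual.toDual := fun i j h => hV0 i j h
        rw [Matrix.det_of_lowerTriangular V ht, Finset.prod_eq_one (fun i _ => hVd i)]
      have hVdetnorm : ‖V.det‖ = 1 := by rw [hVdet]; simp
      have hBunit : IsUnit B.det := isUnit_iff_ne_zero.2 (by
        intro h; rw [h] at hBdet; simp at hBdet)
      have hVunit : IsUnit V.det := by rw [hVdet]; exact isUnit_one
      have hBinv : ∀ i j, ‖B⁻¹ i j‖ ≤ 1 := inv_norm_le hB1 hBdet
      have hVinv : ∀ i j, ‖V⁻¹ i j‖ ≤ 1 := inv_norm_le hV1 hVdetnorm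
      set γ : Fin n → ℚ_[p] := fun i => u i.succ 0 with hγ
      set β : Fin n → ℚ_[p] := fun j => u 0 j.succ with hβ
      set α : ℚ_[p] := u 0 0 with hα
      set v21 : Fin n → ℚ_[p] := B⁻¹ *ᵥ γ with hv21def
      set b12 : Fin n → ℚ_[p] := β ᵥ* V⁻¹ with hb12def
      have hγlt : ∀ i, ‖γ i‖ < 1 := fun i => h2 i.succ 0 (Fin.succ_pos i)
      have hv21 : ∀ i, ‖v21 i‖ < 1 := by
        intro i
        rw [hv21def]
        simp only [Matrix.mulVec, dotProduct]
        refine pad_sum_lt _ _ one_pos ?_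
        intro j _
        calc ‖B⁻¹ i j * γ j‖ = ‖B⁻¹ i j‖ * ‖γ j‖ := norm_mul _ _
          _ ≤ 1 * ‖γ j‖ := mul_le_mul_of_nonneg_right (hBinv i j) (norm_nonneg _)
          _ < 1 := by rw [one_mul]; exact hγlt j
      have hb12 : ∀ j, ‖b12 j‖ ≤ 1 := by
        intro j
        rw [hb12def]
        simp only [Matrix.vecMul, dotProduct]
        refine pad_sum_le _ _ zero_le_one ?_
        intro k _
        calc ‖β k * V⁻¹ k j‖ = ‖β k‖ * ‖V⁻¹ k j‖ := norm_mul _ _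
          _ ≤ 1 * 1 := mul_le_mul (h1 _ _) (hVinv k j) (norm_nonneg _) zero_le_one
          _ = 1 := one_mul 1
      set b11 : ℚ_[p] := α - b12 ⬝ᵥ v21 with hb11def
      have hdot : ‖b12 ⬝ᵥ v21‖ < 1 := by
        simp only [dotProduct]
        refine pad_sum_lt _ _ one_pos ?_
        intro k _
        calc ‖b12 k * v21 k‖ = ‖b12 k‖ * ‖v21 k‖ := norm_mul _ _
          _ ≤ 1 * ‖v21 k‖ := mul_le_mul_of_nonneg_right (hb12 k) (norm_nonneg _)
          _ < 1 := by rw [one_mul]; exact hv21 k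
      have hb11 : ‖b11‖ = 1 := by
        have : b11 = α + (-(b12 ⬝ᵥ v21)) := by rw [hb11def]; ring
        rw [this, pad_add_eq_left]
        · exact hd 0
        · rw [norm_neg, hd 0]; exact hdot
      refine ⟨Matrix.of (Fin.cons (Fin.cons b11 b12) (fun i' => Fin.cons 0 (B i'))),
        Matrix.of (Fin.cons (Fin.cons 1 0) (fun i' => Fin.cons (v21 i') (V i'))),
        ?_, ?_, ?_, ?_, ?_, ?_, ?_, ?_⟩
      · intro i j
        induction i using Fin.cases with
        | zero =>
            induction j using Fin.cases with
            | zero => simp only [Matrix.of_apply, Fin.cons_zero]; rw [hb11]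
            | succ j' => simpa using hb12 j'
        | succ i' =>
            induction j using Fin.cases with
            | zero => simp
            | succ j' => simpa using hB1 i' j'
      · intro i j h
        induction i using Fin.cases with
        | zero => exact absurd h (Fin.not_lt_zero j).elim
        | succ i' =>
            induction j using Fin.cases with
            | zero => simp
            | succ j' => simpa using hB0 i' j' (Fin.succ_lt_succ_iff.1 h)
      · intro i
        induction i using Fin.cases with
        | zero => simpa using hb11
        | succ i' => simpa using hBd i'
      · intro i j
        induction i using Fin.cases with
        | zero =>
            induction j using Fin.cases with
            | zero => simp
            | succ j' => simp
        | succ i' =>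
            induction j using Fin.cases with
            | zero => simpa using (hv21 i').le
            | succ j' => simpa using hV1 i' j'
      · intro i j h
        induction j using Fin.cases with
        | zero => exact absurd h (Fin.not_lt_zero i).elim
        | succ j' =>
            induction i using Fin.cases with
            | zero => simp
            | succ i' => simpa using hV0 i' j' (Fin.succ_lt_succ_iff.1 h)
      · intro i
        induction i using Fin.cases with
        | zero => simp
        | succ i' => simpa using hVd i'
      · intro i j h
        induction i using Fin.cases with
        | zero => exact absurd h (Fin.not_lt_zero j).elim
        | succ i' =>
            induction j using Fin.cases with
            | zero => simpa using hv21 i'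
            | succ j' => simpa using hVlt i' j' (Fin.succ_lt_succ_iff.1 h)
      · ext i j
        rw [Matrix.mul_apply, Fin.sum_univ_succ]
        induction i using Fin.cases with
        | zero =>
            induction j using Fin.cases with
            | zero =>
                simp only [Matrix.of_apply, Fin.cons_zero, Fin.cons_succ]
                rw [hb11def]
                simp [dotProduct]
                try ring
            | succ j' =>
                simp only [Matrix.of_apply, Fin.cons_zero, Fin.cons_succ, Pi.zero_apply,
                  mul_zero, zero_add]
                have : b12 ᵥ* V = β := by
                  rw [hb12def, Matrix.vecMul_vecMul, Matrix.nonsing_inv_mul V hVunit,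
                    Matrix.vecMul_one]
                have h2' := congrFun this j'
                simpa [Matrix.vecMul, dotProduct] using h2'.symm
        | succ i' =>
            induction j using Fin.cases with
            | zero =>
                simp only [Matrix.of_apply, Fin.cons_zero, Fin.cons_succ, zero_mul, zero_add]
                have : B *ᵥ v21 = γ := by
                  rw [hv21def, Matrix.mulVec_mulVec, Matrix.mul_nonsing_inv B hBunit,
                    Matrix.one_mulVec]
                have h2' := congrFun this i'
                simpa [Matrix.mulVec, dotProduct] using h2'.symm
            | succ j' =>
                simp only [Matrix.of_apply, Fin.cons_zero, Fin.cons_succ, zero_mul, zero_add]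
                have h2' := congrFun (congrFun hBV i') j'
                simpa [hD, Matrix.mul_apply, Matrix.submatrix] using h2'

-- basic facts
lemma pPos : (0:ℝ) < (p:ℝ) := by exact_mod_cast (Fact.out : p.Prime).pos
lemma pOne : (1:ℝ) ≤ (p:ℝ) := by exact_mod_cast (Fact.out : p.Prime).one_lt.le
lemma pNe : ((p:ℚ_[p]) ≠ 0) := Nat.cast_ne_zero.mpr (Fact.out : p.Prime).ne_zero

lemma dGL_coe (a : Fin n → ℤ) :
    ((dGL p n a : Matrix.GeneralLinearGroup (Fin n) ℚ_[p]) : Matrix (Fin n) (Fin n) ℚ_[p])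
      = Matrix.diagonal fun i => (p : ℚ_[p]) ^ (a i) := rfl

lemma dGL_mul (a a' : Fin n → ℤ) : dGL p n a * dGL p n a' = dGL p n (a + a') := by
  apply Units.ext
  rw [Units.val_mul, dGL_coe, dGL_coe, dGL_coe, Matrix.diagonal_mul_diagonal]
  congr 1
  funext i
  simp [zpow_add₀ pNe]

lemma dGL_inv (a : Fin n → ℤ) : (dGL p n a)⁻¹ = dGL p n (-a) := by
  symm
  apply eq_inv_of_mul_eq_one_right
  rw [dGL_mul]
  apply Units.ext
  rw [dGL_coe]
  simp

lemma one_mem_Iwahori : (1 : Matrix.GeneralLinearGroup (Fin n) ℚ_[p]) ∈ Iwahori p n := by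
  refine ⟨?_, ?_, ?_⟩
  · intro i j
    rcases eq_or_ne i j with rfl | hij
    · simp [Matrix.one_apply]
    · simp [Matrix.one_apply, hij]
  · simp
  · intro i j h
    simp [Matrix.one_apply, (ne_of_lt h).symm]

lemma mul_mem_Iwahori {x y : Matrix.GeneralLinearGroup (Fin n) ℚ_[p]}
    (hx : x ∈ Iwahori p n) (hy : y ∈ Iwahori p n) : x * y ∈ Iwahori p n := by
  obtain ⟨hx1, hx2, hx3⟩ := hx
  obtain ⟨hy1, hy2, hy3⟩ := hy
  refine ⟨?_, ?_, ?_⟩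
  · intro i j
    rw [Units.val_mul, Matrix.mul_apply]
    refine pad_sum_le _ _ zero_le_one ?_
    intro k _
    rw [norm_mul]
    calc ‖(x : Matrix (Fin n) (Fin n) ℚ_[p]) i k‖ * ‖(y : Matrix (Fin n) (Fin n) ℚ_[p]) k j‖
        ≤ 1 * 1 := mul_le_mul (hx1 i k) (hy1 k j) (norm_nonneg _) zero_le_one
      _ = 1 := one_mul 1
  · rw [Units.val_mul, Matrix.det_mul, norm_mul, hx2, hy2, one_mul]
  · intro i j h
    rw [Units.val_mul, Matrix.mul_apply]
    refine pad_sum_lt _ _ one_pos ?_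
    intro k _
    rw [norm_mul]
    rcases le_or_gt k j with hkj | hjk
    · calc ‖(x : Matrix (Fin n) (Fin n) ℚ_[p]) i k‖ * ‖(y : Matrix (Fin n) (Fin n) ℚ_[p]) k j‖
          ≤ ‖(x : Matrix (Fin n) (Fin n) ℚ_[p]) i k‖ * 1 :=
            mul_le_mul_of_nonneg_left (hy1 k j) (norm_nonneg _)
        _ < 1 := by rw [mul_one]; exact hx3 i k (lt_of_le_of_lt hkj h)
    · calc ‖(x : Matrix (Fin n) (Fin n) ℚ_[p]) i k‖ * ‖(y : Matrix (Fin n) (Fin n) ℚ_[p]) k j‖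
          ≤ 1 * ‖(y : Matrix (Fin n) (Fin n) ℚ_[p]) k j‖ :=
            mul_le_mul_of_nonneg_right (hx1 i k) (norm_nonneg _)
        _ < 1 := by rw [one_mul]; exact hy3 k j hjk

lemma pfac (k l : ℤ) (x : ℚ_[p]) :
    ‖(p:ℚ_[p])^k * x * (p:ℚ_[p])^l‖ = (p:ℝ)^(-(k+l)) * ‖x‖ := by
  rw [norm_mul, norm_mul, Padic.norm_p_zpow, Padic.norm_p_zpow,
    neg_add, zpow_add₀ (ne_of_gt pPos)]
  ring

lemma pfac_le (k l : ℤ) (h : 0 ≤ k + l) (x : ℚ_[p]) :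
    ‖(p:ℚ_[p])^k * x * (p:ℚ_[p])^l‖ ≤ ‖x‖ := by
  rw [pfac]
  calc (p:ℝ)^(-(k+l)) * ‖x‖ ≤ 1 * ‖x‖ :=
      mul_le_mul_of_nonneg_right
        (zpow_le_one_of_nonpos₀ pOne (neg_nonpos.2 h)) (norm_nonneg _)
    _ = ‖x‖ := one_mul _

lemma det_conj_norm (d d' : Fin n → ℚ_[p]) (hdd' : ∀ i, d i * d' i = 1)
    (B : Matrix (Fin n) (Fin n) ℚ_[p]) :
    ‖(Matrix.diagonal d * B * Matrix.diagonal d').det‖ = ‖B.det‖ := by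
  rw [Matrix.det_mul, Matrix.det_mul, Matrix.det_diagonal, Matrix.det_diagonal]
  have : (∏ i, d i) * B.det * ∏ i, d' i = ((∏ i, d i) * ∏ i, d' i) * B.det := by ring
  rw [this, ← Finset.prod_mul_distrib, Finset.prod_congr rfl (fun i _ => hdd' i),
    Finset.prod_const_one, one_mul]

lemma conj_upper_mem {a : Fin n → ℤ} (ha : Antitone a)
    (bG : Matrix.GeneralLinearGroup (Fin n) ℚ_[p])
    (hb1 : ∀ i j, ‖(bG : Matrix (Fin n) (Fin n) ℚ_[p]) i j‖ ≤ 1)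
    (hb0 : ∀ i j : Fin n, j < i → (bG : Matrix (Fin n) (Fin n) ℚ_[p]) i j = 0)
    (hbdet : ‖(bG : Matrix (Fin n) (Fin n) ℚ_[p]).det‖ = 1) :
    dGL p n a * bG * dGL p n (-a) ∈ Iwahori p n := by
  have hcoe : ((dGL p n a * bG * dGL p n (-a) :
      Matrix.GeneralLinearGroup (Fin n) ℚ_[p]) : Matrix (Fin n) (Fin n) ℚ_[p])
      = Matrix.diagonal (fun i => (p:ℚ_[p]) ^ (a i)) * (bG : Matrix (Fin n) (Fin n) ℚ_[p])
        * Matrix.diagonal (fun i => (p:ℚ_[p]) ^ (-a i)) := by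
    rw [Units.val_mul, Units.val_mul, dGL_coe, dGL_coe]
    rfl
  have hentry : ∀ i j, ((dGL p n a * bG * dGL p n (-a) :
      Matrix.GeneralLinearGroup (Fin n) ℚ_[p]) : Matrix (Fin n) (Fin n) ℚ_[p]) i j
      = (p:ℚ_[p]) ^ (a i) * (bG : Matrix (Fin n) (Fin n) ℚ_[p]) i j * (p:ℚ_[p]) ^ (-a j) := by
    intro i j
    rw [hcoe, Matrix.mul_diagonal, Matrix.diagonal_mul]
  refine ⟨?_, ?_, ?_⟩
  · intro i j
    rw [hentry]
    rcases le_or_gt i j with hij | hij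
    · calc ‖(p:ℚ_[p]) ^ (a i) * (bG : Matrix (Fin n) (Fin n) ℚ_[p]) i j * (p:ℚ_[p]) ^ (-a j)‖
          ≤ ‖(bG : Matrix (Fin n) (Fin n) ℚ_[p]) i j‖ := pfac_le _ _ (by
            have := ha hij; omega) _
        _ ≤ 1 := hb1 i j
    · rw [hb0 i j hij]; simp
  · rw [hcoe, det_conj_norm _ _ (fun i => by rw [← zpow_add₀ pNe]; simp) _, hbdet]
  · intro i j h
    rw [hentry, hb0 i j h]
    simp

lemma conj_lower_mem {a : Fin n → ℤ} (ha : Antitone a)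
    (vG : Matrix.GeneralLinearGroup (Fin n) ℚ_[p])
    (hv1 : ∀ i j, ‖(vG : Matrix (Fin n) (Fin n) ℚ_[p]) i j‖ ≤ 1)
    (hv0 : ∀ i j : Fin n, i < j → (vG : Matrix (Fin n) (Fin n) ℚ_[p]) i j = 0)
    (hvd : ∀ i, (vG : Matrix (Fin n) (Fin n) ℚ_[p]) i i = 1)
    (hvlt : ∀ i j : Fin n, j < i → ‖(vG : Matrix (Fin n) (Fin n) ℚ_[p]) i j‖ < 1) :
    dGL p n (-a) * vG * dGL p n a ∈ Iwahori p n := by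
  have hcoe : ((dGL p n (-a) * vG * dGL p n a :
      Matrix.GeneralLinearGroup (Fin n) ℚ_[p]) : Matrix (Fin n) (Fin n) ℚ_[p])
      = Matrix.diagonal (fun i => (p:ℚ_[p]) ^ (-a i)) * (vG : Matrix (Fin n) (Fin n) ℚ_[p])
        * Matrix.diagonal (fun i => (p:ℚ_[p]) ^ (a i)) := by
    rw [Units.val_mul, Units.val_mul, dGL_coe, dGL_coe]
    rfl
  have hentry : ∀ i j, ((dGL p n (-a) * vG * dGL p n a :
      Matrix.GeneralLinearGroup (Fin n) ℚ_[p]) : Matrix (Fin n) (Fin n) ℚ_[p]) i j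
      = (p:ℚ_[p]) ^ (-a i) * (vG : Matrix (Fin n) (Fin n) ℚ_[p]) i j * (p:ℚ_[p]) ^ (a j) := by
    intro i j
    rw [hcoe, Matrix.mul_diagonal, Matrix.diagonal_mul]
  have hvdet : ‖(vG : Matrix (Fin n) (Fin n) ℚ_[p]).det‖ = 1 :=
    det_norm_one_of_diag hv1 hvlt (fun i => by rw [hvd i]; simp)
  refine ⟨?_, ?_, ?_⟩
  · intro i j
    rw [hentry]
    rcases lt_trichotomy i j with hij | rfl | hij
    · rw [hv0 i j hij]; simp
    · rw [hvd i]
      calc ‖(p:ℚ_[p]) ^ (-a i) * 1 * (p:ℚ_[p]) ^ (a i)‖ ≤ ‖(1:ℚ_[p])‖ :=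
          pfac_le _ _ (by omega) _
        _ = 1 := by simp
    · calc ‖(p:ℚ_[p]) ^ (-a i) * (vG : Matrix (Fin n) (Fin n) ℚ_[p]) i j * (p:ℚ_[p]) ^ (a j)‖
          ≤ ‖(vG : Matrix (Fin n) (Fin n) ℚ_[p]) i j‖ := pfac_le _ _ (by
            have := ha hij.le; omega) _
        _ ≤ 1 := hv1 i j
  · rw [hcoe, det_conj_norm _ _ (fun i => by rw [← zpow_add₀ pNe]; simp) _, hvdet]
  · intro i j h
    rw [hentry]
    calc ‖(p:ℚ_[p]) ^ (-a i) * (vG : Matrix (Fin n) (Fin n) ℚ_[p]) i j * (p:ℚ_[p]) ^ (a j)‖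
        ≤ ‖(vG : Matrix (Fin n) (Fin n) ℚ_[p]) i j‖ := pfac_le _ _ (by
          have := ha h.le; omega) _
      _ < 1 := hvlt i j h

open Pointwise in
lemma coset_mul_eq {a a' : Fin n → ℤ} (ha : Antitone a) (ha' : Antitone a') :
    (Iwahori p n * {dGL p n a} * Iwahori p n) * (Iwahori p n * {dGL p n a'} * Iwahori p n)
      = Iwahori p n * {dGL p n (a + a')} * Iwahori p n := by
  ext x
  constructor
  · intro hx
    obtain ⟨y, hy, z, hz, rfl⟩ := Set.mem_mul.1 hx
    obtain ⟨y1, hy1, i2, hi2, rfl⟩ := Set.mem_mul.1 hy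
    obtain ⟨i1, hi1, d1, hd1, rfl⟩ := Set.mem_mul.1 hy1
    obtain ⟨z1, hz1, i4, hi4, rfl⟩ := Set.mem_mul.1 hz
    obtain ⟨i3, hi3, d2, hd2, rfl⟩ := Set.mem_mul.1 hz1
    rw [Set.mem_singleton_iff] at hd1 hd2
    subst hd1 hd2
    set u := i2 * i3 with hu
    have hu_mem : u ∈ Iwahori p n := mul_mem_Iwahori hi2 hi3
    obtain ⟨hu1, hu2, hu3⟩ := hu_mem
    have hud := diag_norm_one hu1 hu3 hu2
    obtain ⟨b, v, hb1, hb0, hbd, hv1, hv0, hvd, hvlt, hbv⟩ :=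
      iwahori_factor n (u : Matrix (Fin n) (Fin n) ℚ_[p]) hu1 hu3 hud
    have hbdet : ‖b.det‖ = 1 :=
      det_norm_one_of_diag hb1 (fun i j h => by rw [hb0 i j h]; simp) hbd
    have hvdet : ‖v.det‖ = 1 :=
      det_norm_one_of_diag hv1 hvlt (fun i => by rw [hvd i]; simp)
    have hbne : b.det ≠ 0 := fun h0 => by rw [h0] at hbdet; simp at hbdet
    have hvne : v.det ≠ 0 := fun h0 => by rw [h0] at hvdet; simp at hvdet
    set bG := Matrix.GeneralLinearGroup.mkOfDetNeZero b hbne with hbG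
    set vG := Matrix.GeneralLinearGroup.mkOfDetNeZero v hvne with hvG
    have hbGcoe : (bG : Matrix (Fin n) (Fin n) ℚ_[p]) = b := rfl
    have hvGcoe : (vG : Matrix (Fin n) (Fin n) ℚ_[p]) = v := rfl
    have hkey : u = bG * vG := by
      apply Units.ext
      show (u : Matrix (Fin n) (Fin n) ℚ_[p]) = ((bG * vG : Matrix.GeneralLinearGroup (Fin n) ℚ_[p]) : Matrix (Fin n) (Fin n) ℚ_[p])
      rw [hbv, Units.val_mul, hbGcoe, hvGcoe]
    have hw1 : i1 * (dGL p n a * bG * dGL p n (-a)) ∈ Iwahori p n :=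
      mul_mem_Iwahori hi1 (conj_upper_mem ha bG (hbGcoe ▸ hb1) (fun i j h => by
        rw [hbGcoe]; exact hb0 i j h) (hbGcoe ▸ hbdet))
    have hw2 : (dGL p n (-a') * vG * dGL p n a') * i4 ∈ Iwahori p n :=
      mul_mem_Iwahori (conj_lower_mem ha' vG (hvGcoe ▸ hv1) (fun i j h => by
        rw [hvGcoe]; exact hv0 i j h) (fun i => by rw [hvGcoe]; exact hvd i)
        (fun i j h => by rw [hvGcoe]; exact hvlt i j h)) hi4
    refine Set.mem_mul.2 ⟨i1 * (dGL p n a * bG * dGL p n (-a)) * dGL p n (a + a'),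
      Set.mem_mul.2 ⟨i1 * (dGL p n a * bG * dGL p n (-a)), hw1,
        dGL p n (a + a'), rfl, rfl⟩,
      (dGL p n (-a') * vG * dGL p n a') * i4, hw2, ?_⟩
    have hda : dGL p n (-a) = (dGL p n a)⁻¹ := by rw [dGL_inv]
    have hda' : dGL p n (-a') = (dGL p n a')⁻¹ := by rw [dGL_inv]
    have hdaa : dGL p n (a + a') = dGL p n a * dGL p n a' := (dGL_mul a a').symm
    rw [hda, hda', hdaa]
    calc i1 * (dGL p n a * bG * (dGL p n a)⁻¹) * (dGL p n a * dGL p n a')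
          * ((dGL p n a')⁻¹ * vG * dGL p n a' * i4)
        = i1 * dGL p n a * (bG * vG) * dGL p n a' * i4 := by group
      _ = i1 * dGL p n a * u * dGL p n a' * i4 := by rw [← hkey]
      _ = i1 * dGL p n a * i2 * (i3 * dGL p n a' * i4) := by rw [hu]; group
  · intro hx
    obtain ⟨y, hy, i2, hi2, rfl⟩ := Set.mem_mul.1 hx
    obtain ⟨i1, hi1, d, hd, rfl⟩ := Set.mem_mul.1 hy
    rw [Set.mem_singleton_iff] at hd
    subst hd
    refine Set.mem_mul.2 ⟨i1 * dGL p n a * 1,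
      Set.mem_mul.2 ⟨i1 * dGL p n a, Set.mem_mul.2 ⟨i1, hi1, dGL p n a, rfl, rfl⟩,
        1, one_mem_Iwahori, rfl⟩,
      1 * dGL p n a' * i2,
      Set.mem_mul.2 ⟨1 * dGL p n a',
        Set.mem_mul.2 ⟨1, one_mem_Iwahori, dGL p n a', rfl, rfl⟩, i2, hi2, rfl⟩, ?_⟩
    rw [← dGL_mul]
    group


/-- For decreasing tuples of integers `a` and `a'`, the Iwahori double
cosets `I d_a I` and `I d_{a'} I` commute as subsets of `GL_n(ℚ_p)`: this expresses the
commutativity of the Atkin–Lehner subalgebra of the Iwahori–Hecke algebra. -/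
theorem doubleCoset_comm (p : ℕ) [Fact p.Prime] (n : ℕ) (hn : 1 ≤ n)
    (a a' : Fin n → ℤ) (ha : Antitone a) (ha' : Antitone a') :
    (Iwahori p n * {dGL p n a} * Iwahori p n) *
        (Iwahori p n * {dGL p n a'} * Iwahori p n)
      = (Iwahori p n * {dGL p n a'} * Iwahori p n) *
          (Iwahori p n * {dGL p n a} * Iwahori p n) := by
  rw [coset_mul_eq ha ha', coset_mul_eq ha' ha, add_comm]
end
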